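/- Let M be a finite-dimensional graded Lie algebra of maximal class with exactly two distinct two-step centralizers 𝔽y and 𝔽x, and suppose C_{dim M - 2} ≠ C₂. Then M is determined up to isomorphism of graded Lie algebras by its sequence of two-step centralizers (C_i); equivalently, two such algebras with the same centralizer sequence and same dimension are isomorphic as graded Lie algebras. -/

import Mathlib

/-- `a` centralizes the homogeneous component `S`. -/
def centralizesIn {K L : Type*} [Field K] [LieRing L] [LieAlgebra K L]
    (a : L) (S : Submodule K L) : Prop :=
  ∀ u ∈ S, ⁅u, a⁆ = 0

open Classical in
noncomputable def cgo (K : Type*) [Field K] (q : ℕ → Prop) : ℕ → ℕ → K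
  | 0, i => (if q i then (if q (i+1) then (0:K) else 1) else 0)
      - (if q i then (0:K) else (if q (i+1) then 1 else 0))
  | (m+1), i => cgo K q m i * (if q (m+2) ↔ q (i+(m+2)) then 1 else 0)
      - (if q i ↔ q (m+2) then 1 else 0) * cgo K q m (i+1)

open Classical in
noncomputable def eseq {K L : Type*} [Field K] [LieRing L] [LieAlgebra K L]
    (M : ℕ → Submodule K L) (x y : L) : ℕ → L
  | 0 => 0
  | 1 => x
  | 2 => ⁅x, y⁆
  | (i+3) => if centralizesIn y (M (i+2)) then ⁅eseq M x y (i+2), x⁆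
      else ⁅eseq M x y (i+2), y⁆

theorem lie_hom_of_span {K L L' : Type*} [Field K] [LieRing L] [LieAlgebra K L]
    [LieRing L'] [LieAlgebra K L'] (f : L →ₗ[K] L') {S : Set L}
    (hS : Submodule.span K S = ⊤)
    (hb : ∀ a ∈ S, ∀ c ∈ S, f ⁅a, c⁆ = ⁅f a, f c⁆) :
    ∀ u v : L, f ⁅u, v⁆ = ⁅f u, f v⁆ := by
  have hmem : ∀ z : L, z ∈ Submodule.span K S := fun z => by rw [hS]; trivial
  intro u v
  suffices h : ∀ w, f ⁅u, w⁆ = ⁅f u, f w⁆ from h v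
  refine Submodule.span_induction (p := fun u _ => ∀ w, f ⁅u, w⁆ = ⁅f u, f w⁆)
    ?_ ?_ ?_ ?_ (hmem u)
  · intro a ha w
    refine Submodule.span_induction (p := fun w _ => f ⁅a, w⁆ = ⁅f a, f w⁆)
      ?_ ?_ ?_ ?_ (hmem w)
    · exact fun c hc => hb a ha c hc
    · simp
    · intro c d _ _ hc hd; simp [lie_add, hc, hd]
    · intro t c _ hc; simp [lie_smul, hc]
  · intro w; simp
  · intro a c _ _ ha hc w; simp [add_lie, ha w, hc w]
  · intro t a _ ha w; simp [smul_lie, ha w]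

theorem maxClassAux {K L : Type*} [Field K] [LieRing L] [LieAlgebra K L]
    (M : ℕ → Submodule K L) (x y : L) (n : ℕ) (hn : 3 ≤ n)
    (hdim1 : Module.finrank K (M 1) = 2)
    (hx : x ∈ M 1) (hy : y ∈ M 1) (hxy : LinearIndependent K ![x, y])
    (hgrade : ∀ i j, ∀ u ∈ M i, ∀ w ∈ M j, ⁅u, w⁆ ∈ M (i + j))
    (hstep : ∀ i ≥ 1, Submodule.span K {w | ∃ u ∈ M i, ∃ a ∈ M 1, w = ⁅u, a⁆} = M (i + 1))
    (htopne : M (n - 1) ≠ ⊥) (htop : M n = ⊥)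
    (htwo : ∀ i, 2 ≤ i → i < n - 1 →
      (centralizesIn y (M i) ∧ ¬ centralizesIn x (M i)) ∨
      (centralizesIn x (M i) ∧ ¬ centralizesIn y (M i))) :
    (∀ i, 1 ≤ i → eseq M x y i ∈ M i) ∧
    (∀ i, n ≤ i → M i = ⊥) ∧
    (∀ i, n ≤ i → eseq M x y i = 0) ∧
    (M 1 = Submodule.span K {x, y}) ∧
    (∀ i, 2 ≤ i → M i = Submodule.span K {eseq M x y i}) ∧
    (∀ i, 2 ≤ i → i ≤ n - 1 → eseq M x y i ≠ 0) ∧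
    (∀ i, 2 ≤ i → (centralizesIn y (M i) → ⁅eseq M x y i, x⁆ = eseq M x y (i+1)) ∧
        (¬ centralizesIn y (M i) → ⁅eseq M x y i, x⁆ = 0)) ∧
    (∀ i, 2 ≤ i → (centralizesIn y (M i) → ⁅eseq M x y i, y⁆ = 0) ∧
        (¬ centralizesIn y (M i) → ⁅eseq M x y i, y⁆ = eseq M x y (i+1))) ∧
    (∀ j, 2 ≤ j → ∀ i, 2 ≤ i →
      ⁅eseq M x y i, eseq M x y j⁆
        = cgo K (fun k => centralizesIn y (M k)) (j - 2) i • eseq M x y (i + j)) := by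
  classical
  -- bottom propagation
  have hbotmono : ∀ i, 1 ≤ i → M i = ⊥ → ∀ j, i ≤ j → M j = ⊥ := by
    intro i hi hbot j hj
    induction j, hj using Nat.le_induction with
    | base => exact hbot
    | succ k hk ih =>
      rw [← hstep k (le_trans hi hk), Submodule.span_eq_bot]
      rintro w ⟨u, hu, a, _, rfl⟩
      rw [ih] at hu
      rw [(Submodule.mem_bot K).1 hu, zero_lie]
  have hzero : ∀ i, n ≤ i → M i = ⊥ := fun i hi =>
    hbotmono n (by omega) htop i hi
  have hnbot : ∀ i, 1 ≤ i → i ≤ n - 1 → M i ≠ ⊥ := by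
    intro i h1 h2 hbot
    exact htopne (hbotmono i h1 hbot (n-1) (by omega))
  have hr : Set.range ![x, y] = {x, y} := by
    simp [Matrix.range_cons, Matrix.range_empty]
    exact Set.pair_comm y x
  have hM1 : M 1 = Submodule.span K {x, y} := by
    have hle : Submodule.span K {x, y} ≤ M 1 := by
      rw [Submodule.span_le]
      rintro z hz
      rcases hz with rfl | hz
      · exact hx
      · rw [Set.mem_singleton_iff] at hz; rw [hz]; exact hy
    haveI : FiniteDimensional K (M 1) :=
      Module.finite_of_finrank_pos (by rw [hdim1]; norm_num)
    have hfr : Module.finrank K (Submodule.span K ({x, y} : Set L)) = 2 := by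
      rw [← hr, finrank_span_eq_card hxy]
      simp
    exact (Submodule.eq_of_le_of_finrank_le hle (by rw [hdim1, hfr])).symm
  have hmem1 : ∀ u ∈ M 1, ∃ a b : K, a • x + b • y = u := by
    intro u hu; rw [hM1] at hu; exact Submodule.mem_span_pair.1 hu
  have hEmem : ∀ i, 1 ≤ i → eseq M x y i ∈ M i := by
    intro i
    induction i using Nat.strong_induction_on with
    | _ i ih =>
      match i with
      | 0 => intro h; exact absurd h (by omega)
      | 1 => intro _; exact hx
      | 2 => intro _; exact hgrade 1 1 x hx y hy
      | (k+3) =>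
        intro _
        have h2 := ih (k+2) (by omega) (by omega)
        simp only [eseq]
        split
        · exact hgrade (k+2) 1 _ h2 x hx
        · exact hgrade (k+2) 1 _ h2 y hy
  have hEbot : ∀ i, n ≤ i → eseq M x y i = 0 := by
    intro i hi
    have h := hEmem i (by omega)
    rwa [hzero i hi, Submodule.mem_bot] at h
  have hEsucc : ∀ i, 2 ≤ i →
      (centralizesIn y (M i) → eseq M x y (i+1) = ⁅eseq M x y i, x⁆) ∧
      (¬ centralizesIn y (M i) → eseq M x y (i+1) = ⁅eseq M x y i, y⁆) := by
    intro i hi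
    obtain ⟨k, rfl⟩ : ∃ k, i = k + 2 := ⟨i - 2, by omega⟩
    constructor
    · intro h; simp only [eseq]; rw [if_pos h]
    · intro h; simp only [eseq]; rw [if_neg h]
  have hspanle : ∀ i, 2 ≤ i → M i ≤ Submodule.span K {eseq M x y i} := by
    intro i hi
    induction i, hi using Nat.le_induction with
    | base =>
      rw [← hstep 1 le_rfl, Submodule.span_le]
      rintro w ⟨u, hu, a, ha, rfl⟩
      obtain ⟨a1, b1, rfl⟩ := hmem1 u hu
      obtain ⟨a2, b2, rfl⟩ := hmem1 a ha
      rw [SetLike.mem_coe, Submodule.mem_span_singleton]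
      refine ⟨a1 * b2 - b1 * a2, ?_⟩
      have hE2 : eseq M x y 2 = ⁅x, y⁆ := rfl
      rw [hE2]
      simp only [lie_add, add_lie, lie_smul, smul_lie, lie_self, smul_zero,
        zero_add, add_zero]
      rw [show ⁅y, x⁆ = -⁅x, y⁆ from by rw [← lie_skew]]
      module
    | succ k hk ih =>
      by_cases hkn : n - 1 ≤ k
      · rw [hzero (k+1) (by omega)]; exact bot_le
      · rw [← hstep k (by omega), Submodule.span_le]
        rintro w ⟨u, hu, a, ha, rfl⟩
        obtain ⟨c, rfl⟩ := Submodule.mem_span_singleton.1 (ih hu)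
        obtain ⟨α, β, rfl⟩ := hmem1 a ha
        rw [SetLike.mem_coe, Submodule.mem_span_singleton]
        rcases htwo k hk (by omega) with ⟨hqy, _⟩ | ⟨hqx, hqy⟩
        · refine ⟨c * α, ?_⟩
          rw [(hEsucc k hk).1 hqy]
          have h0 : ⁅eseq M x y k, y⁆ = 0 := hqy _ (hEmem k (by omega))
          simp only [lie_add, lie_smul, smul_lie, h0, smul_zero, add_zero]
          module
        · refine ⟨c * β, ?_⟩
          rw [(hEsucc k hk).2 hqy]
          have h0 : ⁅eseq M x y k, x⁆ = 0 := hqx _ (hEmem k (by omega))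
          simp only [lie_add, lie_smul, smul_lie, h0, smul_zero, zero_add]
          module
  have hspan : ∀ i, 2 ≤ i → M i = Submodule.span K {eseq M x y i} := by
    intro i hi
    refine le_antisymm (hspanle i hi) ?_
    rw [Submodule.span_singleton_le_iff_mem]
    exact hEmem i (by omega)
  have hEne : ∀ i, 2 ≤ i → i ≤ n - 1 → eseq M x y i ≠ 0 := by
    intro i h1 h2 h0
    apply hnbot i (by omega) h2
    rw [hspan i h1, h0, Submodule.span_zero_singleton]
  have hbx : ∀ i, 2 ≤ i →
      (centralizesIn y (M i) → ⁅eseq M x y i, x⁆ = eseq M x y (i+1)) ∧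
      (¬ centralizesIn y (M i) → ⁅eseq M x y i, x⁆ = 0) := by
    intro i hi
    constructor
    · intro h; exact ((hEsucc i hi).1 h).symm
    · intro h
      by_cases hin : i < n - 1
      · rcases htwo i hi hin with ⟨hqy, _⟩ | ⟨hqx, _⟩
        · exact absurd hqy h
        · exact hqx _ (hEmem i (by omega))
      · have hm : ⁅eseq M x y i, x⁆ ∈ M (i+1) := hgrade i 1 _ (hEmem i (by omega)) x hx
        rwa [hzero (i+1) (by omega), Submodule.mem_bot] at hm
  have hby : ∀ i, 2 ≤ i →
      (centralizesIn y (M i) → ⁅eseq M x y i, y⁆ = 0) ∧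
      (¬ centralizesIn y (M i) → ⁅eseq M x y i, y⁆ = eseq M x y (i+1)) := by
    intro i hi
    constructor
    · intro h; exact h _ (hEmem i (by omega))
    · intro h; exact ((hEsucc i hi).2 h).symm
  have bxi : ∀ i, 2 ≤ i → ⁅eseq M x y i, x⁆ =
      if centralizesIn y (M i) then eseq M x y (i+1) else 0 := by
    intro i hi; split
    · exact (hbx i hi).1 ‹_›
    · exact (hbx i hi).2 ‹_›
  have byi : ∀ i, 2 ≤ i → ⁅eseq M x y i, y⁆ =
      if centralizesIn y (M i) then 0 else eseq M x y (i+1) := by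
    intro i hi; split
    · exact (hby i hi).1 ‹_›
    · exact (hby i hi).2 ‹_›
  refine ⟨hEmem, hzero, hEbot, hM1, hspan, hEne, hbx, hby, ?_⟩
  intro j hj
  induction j, hj using Nat.le_induction with
  | base =>
    intro i hi
    have hE2 : eseq M x y 2 = ⁅x, y⁆ := rfl
    rw [hE2, leibniz_lie]
    have hsk2 : ⁅x, eseq M x y (i+1)⁆ =
        -(if centralizesIn y (M (i+1)) then eseq M x y (i+2) else 0) := by
      rw [← lie_skew, bxi (i+1) (by omega)]
    rw [bxi i hi, byi i hi]
    by_cases h1 : centralizesIn y (M i) <;> by_cases h2 : centralizesIn y (M (i+1)) <;>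
      simp [cgo, h1, h2, hsk2, byi (i+1) (by omega), sub_smul, one_smul, zero_smul]
  | succ j hj ih =>
    intro i hi
    have hstep2 : j + 1 - 2 = (j - 2) + 1 := by omega
    have hj2 : (j - 2) + 2 = j := by omega
    rw [hstep2]
    have hcg : cgo K (fun k => centralizesIn y (M k)) ((j-2)+1) i =
        cgo K (fun k => centralizesIn y (M k)) (j-2) i *
          (if centralizesIn y (M j) ↔ centralizesIn y (M (i+j)) then 1 else 0)
        - (if centralizesIn y (M i) ↔ centralizesIn y (M j) then 1 else 0) *
          cgo K (fun k => centralizesIn y (M k)) (j-2) (i+1) := by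
      conv_lhs => rw [cgo]
      rw [hj2]
    rw [hcg]
    have hsk : ⁅eseq M x y j, eseq M x y (i+1)⁆ =
        -(cgo K (fun k => centralizesIn y (M k)) (j-2) (i+1) • eseq M x y (i+(j+1))) := by
      rw [← lie_skew, ih (i+1) (by omega), show i+1+j = i+(j+1) from by omega]
    by_cases hqj : centralizesIn y (M j)
    · rw [(hEsucc j hj).1 hqj, leibniz_lie, ih i hi, smul_lie,
        bxi (i+j) (by omega), bxi i hi]
      by_cases hqij : centralizesIn y (M (i+j)) <;> by_cases hqi : centralizesIn y (M i) <;>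
        simp [hqj, hqij, hqi, hsk, show i+j+1 = i+(j+1) from by omega,
          sub_smul, mul_smul, one_smul, zero_smul, lie_zero, smul_zero, mul_comm] <;>
        module
    · rw [(hEsucc j hj).2 hqj, leibniz_lie, ih i hi, smul_lie,
        byi (i+j) (by omega), byi i hi]
      by_cases hqij : centralizesIn y (M (i+j)) <;> by_cases hqi : centralizesIn y (M i) <;>
        simp [hqj, hqij, hqi, hsk, show i+j+1 = i+(j+1) from by omega,
          sub_smul, mul_smul, one_smul, zero_smul, lie_zero, smul_zero, mul_comm] <;>
        module

/-- A finite-dimensional graded Lie algebra of maximal class with exactly two distinct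
two-step centralizers `𝔽y`, `𝔽x`, and with `C_{dim M - 2} ≠ C₂`, is determined up to
graded isomorphism by its sequence of two-step centralizers: two such algebras of the
same dimension `n` with the same centralizer sequence are isomorphic via a graded
Lie algebra isomorphism mapping corresponding generators to each other. -/
theorem maximal_class_determined_by_centralizers {K L L' : Type*} [Field K]
    [LieRing L] [LieAlgebra K L] [LieRing L'] [LieAlgebra K L']
    (M : ℕ → Submodule K L) (M' : ℕ → Submodule K L')
    (x y : L) (x' y' : L') (n : ℕ) (hn : 3 ≤ n)
    -- maximal class structure on M:
    (h0 : M 0 = ⊥) (hsup : iSup M = ⊤) (hindep : iSupIndep M)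
    (hdim1 : Module.finrank K (M 1) = 2)
    (hdim : ∀ i ≥ 2, Module.finrank K (M i) ≤ 1)
    (hx : x ∈ M 1) (hy : y ∈ M 1) (hxy : LinearIndependent K ![x, y])
    (hgrade : ∀ i j, ∀ u ∈ M i, ∀ w ∈ M j, ⁅u, w⁆ ∈ M (i + j))
    (hstep : ∀ i ≥ 1, Submodule.span K {w | ∃ u ∈ M i, ∃ a ∈ M 1, w = ⁅u, a⁆} = M (i + 1))
    -- maximal class structure on M':
    (h0' : M' 0 = ⊥) (hsup' : iSup M' = ⊤) (hindep' : iSupIndep M')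
    (hdim1' : Module.finrank K (M' 1) = 2)
    (hdim' : ∀ i ≥ 2, Module.finrank K (M' i) ≤ 1)
    (hx' : x' ∈ M' 1) (hy' : y' ∈ M' 1) (hxy' : LinearIndependent K ![x', y'])
    (hgrade' : ∀ i j, ∀ u ∈ M' i, ∀ w ∈ M' j, ⁅u, w⁆ ∈ M' (i + j))
    (hstep' : ∀ i ≥ 1,
      Submodule.span K {w | ∃ u ∈ M' i, ∃ a ∈ M' 1, w = ⁅u, a⁆} = M' (i + 1))
    -- both have dimension n:
    (htop : M (n - 1) ≠ ⊥ ∧ M n = ⊥) (htop' : M' (n - 1) ≠ ⊥ ∧ M' n = ⊥)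
    -- exactly two distinct two-step centralizers 𝔽y and 𝔽x, with y spanning C₂:
    (htwo : ∀ i, 2 ≤ i → i < n - 1 →
      (centralizesIn y (M i) ∧ ¬ centralizesIn x (M i)) ∨
      (centralizesIn x (M i) ∧ ¬ centralizesIn y (M i)))
    (htwo' : ∀ i, 2 ≤ i → i < n - 1 →
      (centralizesIn y' (M' i) ∧ ¬ centralizesIn x' (M' i)) ∨
      (centralizesIn x' (M' i) ∧ ¬ centralizesIn y' (M' i)))
    (hC2 : centralizesIn y (M 2)) (hC2' : centralizesIn y' (M' 2))
    (hocc : ∃ i, 2 ≤ i ∧ i < n - 1 ∧ centralizesIn x (M i) ∧ ¬ centralizesIn y (M i))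
    (hocc' : ∃ i, 2 ≤ i ∧ i < n - 1 ∧ centralizesIn x' (M' i) ∧ ¬ centralizesIn y' (M' i))
    -- the hypothesis C_{dim M - 2} ≠ C₂:
    (hlast : ¬ centralizesIn y (M (n - 2))) (hlast' : ¬ centralizesIn y' (M' (n - 2)))
    -- the two algebras have the same sequence of two-step centralizers:
    (hsame : ∀ i, 2 ≤ i → i < n - 1 →
      (centralizesIn y (M i) ↔ centralizesIn y' (M' i))) :
    ∃ e : L ≃ₗ⁅K⁆ L',
      (∀ i, (M i).map e.toLieHom.toLinearMap = M' i) ∧ e x = x' ∧ e y = y' := by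
  classical
  obtain ⟨hEmem, hzero, hEbot, hM1, hspan, hEne, hbx, hby, hbee⟩ :=
    maxClassAux M x y n hn hdim1 hx hy hxy hgrade hstep htop.1 htop.2 htwo
  obtain ⟨hEmem', hzero', hEbot', hM1', hspan', hEne', hbx', hby', hbee'⟩ :=
    maxClassAux M' x' y' n hn hdim1' hx' hy' hxy' hgrade' hstep' htop'.1 htop'.2 htwo'
  -- same centralizer pattern
  have hQ : (fun k => centralizesIn y (M k)) = (fun k => centralizesIn y' (M' k)) := by
    funext k
    apply propext
    rcases Nat.lt_or_ge k 2 with hk | hk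
    · interval_cases k
      · refine iff_of_true ?_ ?_ <;> intro u hu
        · rw [h0] at hu; rw [(Submodule.mem_bot K).1 hu, zero_lie]
        · rw [h0'] at hu; rw [(Submodule.mem_bot K).1 hu, zero_lie]
      · refine iff_of_false ?_ ?_ <;> intro h
        · exact hEne 2 le_rfl (by omega) (by rw [show eseq M x y 2 = ⁅x, y⁆ from rfl]; exact h x hx)
        · exact hEne' 2 le_rfl (by omega)
            (by rw [show eseq M' x' y' 2 = ⁅x', y'⁆ from rfl]; exact h x' hx')
    rcases Nat.lt_or_ge k (n-1) with hk2 | hk2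
    · exact hsame k hk hk2
    rcases Nat.lt_or_ge k n with hk3 | hk3
    · refine iff_of_true ?_ ?_ <;> intro u hu
      · have h := hgrade k 1 u hu y hy
        rwa [show k + 1 = n from by omega, htop.2, Submodule.mem_bot] at h
      · have h := hgrade' k 1 u hu y' hy'
        rwa [show k + 1 = n from by omega, htop'.2, Submodule.mem_bot] at h
    · refine iff_of_true ?_ ?_ <;> intro u hu
      · rw [hzero k hk3] at hu; rw [(Submodule.mem_bot K).1 hu, zero_lie]
      · rw [hzero' k hk3] at hu; rw [(Submodule.mem_bot K).1 hu, zero_lie]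
  have hQk : ∀ k, centralizesIn y (M k) ↔ centralizesIn y' (M' k) :=
    fun k => iff_of_eq (congrFun hQ k)
  -- bases
  have hr : Set.range ![x, y] = {x, y} := by
    simp [Matrix.range_cons, Matrix.range_empty]; exact Set.pair_comm y x
  have hr' : Set.range ![x', y'] = {x', y'} := by
    simp [Matrix.range_cons, Matrix.range_empty]; exact Set.pair_comm y' x'
  have hlig : LinearIndependent K (fun k : Fin (n-2) => eseq M x y ((k : ℕ) + 2)) := by
    apply iSupIndep.linearIndependent (fun k : Fin (n-2) => M ((k : ℕ) + 2))
    · exact hindep.comp (fun k l hkl => by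
        have : (k : ℕ) + 2 = (l : ℕ) + 2 := hkl
        exact Fin.ext (by omega))
    · exact fun k => hEmem _ (by omega)
    · exact fun k => hEne _ (by omega) (by have := k.isLt; omega)
  have hlig' : LinearIndependent K (fun k : Fin (n-2) => eseq M' x' y' ((k : ℕ) + 2)) := by
    apply iSupIndep.linearIndependent (fun k : Fin (n-2) => M' ((k : ℕ) + 2))
    · exact hindep'.comp (fun k l hkl => by
        have : (k : ℕ) + 2 = (l : ℕ) + 2 := hkl
        exact Fin.ext (by omega))
    · exact fun k => hEmem' _ (by omega)
    · exact fun k => hEne' _ (by omega) (by have := k.isLt; omega)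
  have hli : LinearIndependent K
      (Sum.elim ![x, y] (fun k : Fin (n-2) => eseq M x y ((k : ℕ) + 2))) := by
    rw [linearIndependent_sum]
    refine ⟨by rwa [Sum.elim_comp_inl], by rwa [Sum.elim_comp_inr], ?_⟩
    rw [Sum.elim_comp_inl, Sum.elim_comp_inr, hr, ← hM1]
    refine (hindep 1).mono_right ?_
    rw [Submodule.span_le]
    rintro z ⟨k, rfl⟩
    exact Submodule.mem_iSup_of_mem ((k : ℕ) + 2)
      (Submodule.mem_iSup_of_mem (by omega) (hEmem _ (by omega)))
  have hli' : LinearIndependent K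
      (Sum.elim ![x', y'] (fun k : Fin (n-2) => eseq M' x' y' ((k : ℕ) + 2))) := by
    rw [linearIndependent_sum]
    refine ⟨by rwa [Sum.elim_comp_inl], by rwa [Sum.elim_comp_inr], ?_⟩
    rw [Sum.elim_comp_inl, Sum.elim_comp_inr, hr', ← hM1']
    refine (hindep' 1).mono_right ?_
    rw [Submodule.span_le]
    rintro z ⟨k, rfl⟩
    exact Submodule.mem_iSup_of_mem ((k : ℕ) + 2)
      (Submodule.mem_iSup_of_mem (by omega) (hEmem' _ (by omega)))
  have hsp : ⊤ ≤ Submodule.span K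
      (Set.range (Sum.elim ![x, y] (fun k : Fin (n-2) => eseq M x y ((k : ℕ) + 2)))) := by
    rw [← hsup]
    refine iSup_le fun i => ?_
    rcases Nat.lt_or_ge i 1 with h1 | h1
    · interval_cases i; rw [h0]; exact bot_le
    rcases Nat.lt_or_ge i 2 with h2 | h2
    · interval_cases i
      rw [hM1, Submodule.span_le]
      rintro z (rfl | hz)
      · exact Submodule.subset_span ⟨Sum.inl 0, rfl⟩
      · rw [Set.mem_singleton_iff] at hz; subst hz
        exact Submodule.subset_span ⟨Sum.inl 1, rfl⟩
    rcases Nat.lt_or_ge i n with h3 | h3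
    · rw [hspan i h2, Submodule.span_le]
      rintro z hz
      rw [Set.mem_singleton_iff] at hz; subst hz
      refine Submodule.subset_span ⟨Sum.inr ⟨i - 2, by omega⟩, ?_⟩
      show eseq M x y ((i - 2) + 2) = eseq M x y i
      congr 1; omega
    · rw [hzero i h3]; exact bot_le
  have hsp' : ⊤ ≤ Submodule.span K
      (Set.range (Sum.elim ![x', y'] (fun k : Fin (n-2) => eseq M' x' y' ((k : ℕ) + 2)))) := by
    rw [← hsup']
    refine iSup_le fun i => ?_
    rcases Nat.lt_or_ge i 1 with h1 | h1
    · interval_cases i; rw [h0']; exact bot_le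
    rcases Nat.lt_or_ge i 2 with h2 | h2
    · interval_cases i
      rw [hM1', Submodule.span_le]
      rintro z (rfl | hz)
      · exact Submodule.subset_span ⟨Sum.inl 0, rfl⟩
      · rw [Set.mem_singleton_iff] at hz; subst hz
        exact Submodule.subset_span ⟨Sum.inl 1, rfl⟩
    rcases Nat.lt_or_ge i n with h3 | h3
    · rw [hspan' i h2, Submodule.span_le]
      rintro z hz
      rw [Set.mem_singleton_iff] at hz; subst hz
      refine Submodule.subset_span ⟨Sum.inr ⟨i - 2, by omega⟩, ?_⟩
      show eseq M' x' y' ((i - 2) + 2) = eseq M' x' y' i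
      congr 1; omega
    · rw [hzero' i h3]; exact bot_le
  set bb : Module.Basis (Fin 2 ⊕ Fin (n-2)) K L := Module.Basis.mk hli hsp with hbb
  set bb' : Module.Basis (Fin 2 ⊕ Fin (n-2)) K L' := Module.Basis.mk hli' hsp' with hbb'
  set f : L ≃ₗ[K] L' := bb.equiv bb' (Equiv.refl _) with hf
  have hfb : ∀ s, f ((Sum.elim ![x, y] (fun k : Fin (n-2) => eseq M x y ((k : ℕ) + 2))) s)
      = (Sum.elim ![x', y'] (fun k : Fin (n-2) => eseq M' x' y' ((k : ℕ) + 2))) s := by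
    intro s
    rw [show (Sum.elim ![x, y] (fun k : Fin (n-2) => eseq M x y ((k : ℕ) + 2))) s = bb s
        from (Module.Basis.mk_apply hli hsp s).symm, hf]
    rw [Module.Basis.equiv_apply]
    simp [hbb', Module.Basis.mk_apply]
  have hfx : f x = x' := hfb (Sum.inl 0)
  have hfy : f y = y' := hfb (Sum.inl 1)
  have hfE : ∀ m, 2 ≤ m → f (eseq M x y m) = eseq M' x' y' m := by
    intro m hm
    rcases Nat.lt_or_ge m n with h | h
    · have hb1 : (Sum.elim ![x, y] (fun k : Fin (n-2) => eseq M x y ((k : ℕ) + 2)))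
          (Sum.inr ⟨m - 2, by omega⟩) = eseq M x y m := by
        show eseq M x y ((m - 2) + 2) = eseq M x y m; congr 1; omega
      have hb2 : (Sum.elim ![x', y'] (fun k : Fin (n-2) => eseq M' x' y' ((k : ℕ) + 2)))
          (Sum.inr ⟨m - 2, by omega⟩) = eseq M' x' y' m := by
        show eseq M' x' y' ((m - 2) + 2) = eseq M' x' y' m; congr 1; omega
      rw [← hb1, hfb, hb2]
    · rw [hEbot m h, hEbot' m h, map_zero]
  -- bracket compatibility on basis vectors
  have key : ∀ i, 2 ≤ i →
      (f ⁅eseq M x y i, x⁆ = ⁅eseq M' x' y' i, x'⁆) ∧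
      (f ⁅eseq M x y i, y⁆ = ⁅eseq M' x' y' i, y'⁆) := by
    intro i hi
    constructor
    · by_cases h : centralizesIn y (M i)
      · rw [(hbx i hi).1 h, (hbx' i hi).1 ((hQk i).1 h), hfE (i+1) (by omega)]
      · rw [(hbx i hi).2 h, (hbx' i hi).2 (fun c => h ((hQk i).2 c)), map_zero]
    · by_cases h : centralizesIn y (M i)
      · rw [(hby i hi).1 h, (hby' i hi).1 ((hQk i).1 h), map_zero]
      · rw [(hby i hi).2 h, (hby' i hi).2 (fun c => h ((hQk i).2 c)), hfE (i+1) (by omega)]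
  have hE2 : eseq M x y 2 = ⁅x, y⁆ := rfl
  have hE2' : eseq M' x' y' 2 = ⁅x', y'⁆ := rfl
  have hpair : ∀ s t,
      f ⁅(Sum.elim ![x, y] (fun k : Fin (n-2) => eseq M x y ((k : ℕ) + 2))) s,
         (Sum.elim ![x, y] (fun k : Fin (n-2) => eseq M x y ((k : ℕ) + 2))) t⁆
      = ⁅(Sum.elim ![x', y'] (fun k : Fin (n-2) => eseq M' x' y' ((k : ℕ) + 2))) s,
         (Sum.elim ![x', y'] (fun k : Fin (n-2) => eseq M' x' y' ((k : ℕ) + 2))) t⁆ := by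
    have hxE : ∀ i, 2 ≤ i → f ⁅x, eseq M x y i⁆ = ⁅x', eseq M' x' y' i⁆ := by
      intro i hi
      rw [show ⁅x, eseq M x y i⁆ = -⁅eseq M x y i, x⁆ from by rw [← lie_skew],
        show ⁅x', eseq M' x' y' i⁆ = -⁅eseq M' x' y' i, x'⁆ from by rw [← lie_skew],
        map_neg, (key i hi).1]
    have hyE : ∀ i, 2 ≤ i → f ⁅y, eseq M x y i⁆ = ⁅y', eseq M' x' y' i⁆ := by
      intro i hi
      rw [show ⁅y, eseq M x y i⁆ = -⁅eseq M x y i, y⁆ from by rw [← lie_skew],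
        show ⁅y', eseq M' x' y' i⁆ = -⁅eseq M' x' y' i, y'⁆ from by rw [← lie_skew],
        map_neg, (key i hi).2]
    rintro (s | k) (t | l)
    · fin_cases s <;> fin_cases t
      · simp
      · show f ⁅x, y⁆ = ⁅x', y'⁆
        rw [← hE2, ← hE2', hfE 2 le_rfl]
      · show f ⁅y, x⁆ = ⁅y', x'⁆
        rw [show ⁅y, x⁆ = -⁅x, y⁆ from by rw [← lie_skew],
          show ⁅y', x'⁆ = -⁅x', y'⁆ from by rw [← lie_skew], map_neg, ← hE2, ← hE2',
          hfE 2 le_rfl]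
      · simp
    · fin_cases s
      · exact hxE ((l : ℕ) + 2) (by omega)
      · exact hyE ((l : ℕ) + 2) (by omega)
    · fin_cases t
      · exact (key ((k : ℕ) + 2) (by omega)).1
      · exact (key ((k : ℕ) + 2) (by omega)).2
    · show f ⁅eseq M x y ((k : ℕ) + 2), eseq M x y ((l : ℕ) + 2)⁆
        = ⁅eseq M' x' y' ((k : ℕ) + 2), eseq M' x' y' ((l : ℕ) + 2)⁆
      rw [hbee ((l : ℕ) + 2) (by omega) ((k : ℕ) + 2) (by omega),
        hbee' ((l : ℕ) + 2) (by omega) ((k : ℕ) + 2) (by omega),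
        map_smul, hfE (((k : ℕ) + 2) + ((l : ℕ) + 2)) (by omega), hQ]
  have hml : ∀ u v : L, f ⁅u, v⁆ = ⁅f u, f v⁆ := by
    refine lie_hom_of_span (f := (f : L →ₗ[K] L'))
      (S := Set.range (Sum.elim ![x, y] (fun k : Fin (n-2) => eseq M x y ((k : ℕ) + 2))))
      (le_antisymm le_top hsp) ?_
    rintro a ⟨s, rfl⟩ c ⟨t, rfl⟩
    show f ⁅_, _⁆ = ⁅f _, f _⁆
    rw [hfb s, hfb t]
    exact hpair s t
  refine ⟨⟨⟨(f : L →ₗ[K] L'), fun {u v} => hml u v⟩, f.symm, f.left_inv, f.right_inv⟩, ?_, hfx, hfy⟩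
  intro i
  show (M i).map (f : L →ₗ[K] L') = M' i
  rcases Nat.lt_or_ge i 1 with h1 | h1
  · interval_cases i; rw [h0, h0', Submodule.map_bot]
  rcases Nat.lt_or_ge i 2 with h2 | h2
  · interval_cases i
    rw [hM1, hM1', Submodule.map_span]
    congr 1
    rw [Set.image_insert_eq, Set.image_singleton]
    simp only [LinearEquiv.coe_coe]
    rw [hfx, hfy]
  rcases Nat.lt_or_ge i n with h3 | h3
  · rw [hspan i h2, hspan' i h2, Submodule.map_span]
    congr 1
    rw [Set.image_singleton]
    simp only [LinearEquiv.coe_coe]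
    rw [hfE i h2]
  · rw [hzero i h3, hzero' i h3, Submodule.map_bot]
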